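/- Let A, B ∈ ℝ^{n×n} and suppose there exist symmetric positive definite X, Y ∈ ℝ^{n×n} such that [[A, B],[I_n, 0]]ᵀ · diag(X, Y) · [[A, B],[I_n, 0]] − diag(X, Y) < 0. Then ρ(A + B e^{−iθ}) < 1 for all θ ∈ [0, 2π]. -/

import Mathlib

open Matrix Complex

/- STATEMENT 19 (Carvalho condition): if there exist symmetric positive definite
X, Y with [[A,B],[I,0]]ᵀ diag(X,Y) [[A,B],[I,0]] − diag(X,Y) < 0, then
ρ(A + B e^{−iθ}) < 1 for all θ ∈ [0, 2π]. -/
open scoped ComplexOrder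

lemma posDef_map_ofReal {m : Type*} [Fintype m] [DecidableEq m]
    {P : Matrix m m ℝ} (hP : P.PosDef) : (P.map Complex.ofReal).PosDef := by
  have hsym : ∀ i j, P i j = P j i := fun i j => by
    have := congrFun (congrFun hP.1 i) j
    simpa [Matrix.conjTranspose_apply] using this.symm
  refine Matrix.PosDef.of_dotProduct_mulVec_pos ?_ ?_
  · exact hP.1.map _ fun r => by simp [Complex.conj_ofReal]
  · intro x hx
    set u : m → ℝ := fun i => (x i).re with hu
    set v : m → ℝ := fun i => (x i).im with hv
    have expand : star x ⬝ᵥ (P.map Complex.ofReal *ᵥ x)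
        = ∑ i, ∑ j, (P i j : ℂ) * (star (x i) * x j) := by
      simp only [dotProduct, mulVec, Pi.star_apply, Finset.mul_sum, map_apply]
      exact Finset.sum_congr rfl fun i _ => Finset.sum_congr rfl fun j _ => by ring
    rw [Complex.lt_def, expand]
    constructor
    · -- real part positive
      simp only [Complex.zero_re, Complex.re_sum, Complex.mul_re, Complex.ofReal_re,
        Complex.ofReal_im, RCLike.star_def, Complex.mul_im, Complex.conj_re, Complex.conj_im,
        zero_mul, sub_zero, zero_sub]
      have key : ∀ i, ∑ j, P i j * ((x i).re * (x j).re - -(x i).im * (x j).im)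
          = ∑ j, (P i j * (u i * u j) + P i j * (v i * v j)) := by
        intro i; exact Finset.sum_congr rfl fun j _ => by simp [hu, hv]; ring
      simp only [key, Finset.sum_add_distrib]
      have huv : u ≠ 0 ∨ v ≠ 0 := by
        by_contra hc
        push_neg at hc
        apply hx
        funext i
        have h1 : (x i).re = 0 := congrFun hc.1 i
        have h2 : (x i).im = 0 := congrFun hc.2 i
        exact Complex.ext h1 h2
      have hQu : ∀ y : m → ℝ, y ⬝ᵥ (P *ᵥ y) = ∑ i, ∑ j, P i j * (y i * y j) := by
        intro y
        simp only [dotProduct, mulVec, Finset.mul_sum]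
        exact Finset.sum_congr rfl fun i _ => Finset.sum_congr rfl fun j _ => by ring
      have h1 : 0 ≤ ∑ i, ∑ j, P i j * (u i * u j) := by
        rw [← hQu]; simpa using hP.posSemidef.dotProduct_mulVec_nonneg u
      have h2 : 0 ≤ ∑ i, ∑ j, P i j * (v i * v j) := by
        rw [← hQu]; simpa using hP.posSemidef.dotProduct_mulVec_nonneg v
      rcases huv with hne | hne
      · have := hP.dotProduct_mulVec_pos hne
        rw [star_trivial, hQu] at this
        linarith
      · have := hP.dotProduct_mulVec_pos hne
        rw [star_trivial, hQu] at this
        linarith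
    · -- imaginary part zero
      simp only [Complex.zero_im, Complex.im_sum, Complex.mul_im, Complex.ofReal_re,
        Complex.ofReal_im, RCLike.star_def, Complex.mul_re, Complex.conj_re, Complex.conj_im,
        zero_mul, add_zero]
      have key : ∀ i j, P i j * ((x i).re * (x j).im + -(x i).im * (x j).re)
          = P i j * (u i * v j) - P i j * (v i * u j) := by
        intro i j; simp [hu, hv]; ring
      simp only [key, Finset.sum_sub_distrib]
      rw [eq_comm, sub_eq_zero, Finset.sum_comm]
      exact (Finset.sum_congr rfl fun j _ => Finset.sum_congr rfl fun i _ => by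
        rw [hsym i j]; ring).symm


theorem stmt19 {n : ℕ} (A B : Matrix (Fin n) (Fin n) ℝ)
    (X Y : Matrix (Fin n) (Fin n) ℝ) (hX : X.PosDef) (hY : Y.PosDef)
    (h : (-((Matrix.fromBlocks A B (1 : Matrix (Fin n) (Fin n) ℝ) 0)ᵀ *
          Matrix.fromBlocks X 0 0 Y *
          Matrix.fromBlocks A B (1 : Matrix (Fin n) (Fin n) ℝ) 0 -
        Matrix.fromBlocks X 0 0 Y)).PosDef) :
    ∀ θ ∈ Set.Icc (0 : ℝ) (2 * Real.pi),
      ∀ μ ∈ spectrum ℂ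
        (A.map (Complex.ofReal) +
          Complex.exp (-(θ : ℂ) * Complex.I) • B.map (Complex.ofReal)),
        ‖μ‖ < 1 := by
  intro θ hθ μ hμ
  set c : ℂ := Complex.exp (-(θ : ℂ) * Complex.I) with hc
  set A' : Matrix (Fin n) (Fin n) ℂ := A.map Complex.ofReal with hA'
  set B' : Matrix (Fin n) (Fin n) ℂ := B.map Complex.ofReal with hB'
  set X' : Matrix (Fin n) (Fin n) ℂ := X.map Complex.ofReal with hX'
  set Y' : Matrix (Fin n) (Fin n) ℂ := Y.map Complex.ofReal with hY'
  set C : Matrix (Fin n) (Fin n) ℂ := A' + c • B' with hC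
  -- |c| property
  have hcc : star c * c = 1 := by
    rw [hc, RCLike.star_def, ← Complex.exp_conj, ← Complex.exp_add]
    have : (starRingEnd ℂ) (-(θ : ℂ) * Complex.I) = (θ : ℂ) * Complex.I := by
      simp [Complex.conj_ofReal]
    rw [this]
    ring_nf
    exact Complex.exp_zero
  -- eigenvector
  rw [spectrum.mem_iff] at hμ
  have hdet : (algebraMap ℂ (Matrix (Fin n) (Fin n) ℂ) μ - C).det = 0 := by
    by_contra hd
    exact hμ ((Matrix.isUnit_iff_isUnit_det _).2 (Ne.isUnit hd))
  obtain ⟨w, hw0, hw⟩ := (Matrix.exists_mulVec_eq_zero_iff).2 hdet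
  have heig : C *ᵥ w = μ • w := by
    have halg : (algebraMap ℂ (Matrix (Fin n) (Fin n) ℂ) μ) *ᵥ w = μ • w := by
      funext i
      simp [Matrix.algebraMap_eq_diagonal, Matrix.mulVec_diagonal]
    rw [Matrix.sub_mulVec, halg, sub_eq_zero] at hw
    exact hw.symm
  -- complexified block matrices
  set M' : Matrix (Fin n ⊕ Fin n) (Fin n ⊕ Fin n) ℂ := Matrix.fromBlocks A' B' 1 0 with hM'
  set D' : Matrix (Fin n ⊕ Fin n) (Fin n ⊕ Fin n) ℂ := Matrix.fromBlocks X' 0 0 Y' with hD'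
  have hMmap : (Matrix.fromBlocks A B (1 : Matrix (Fin n) (Fin n) ℝ) 0).map Complex.ofReal
      = M' := by
    rw [Matrix.fromBlocks_map]
    rw [hM', Matrix.map_one _ Complex.ofReal_zero Complex.ofReal_one,
      Matrix.map_zero _ Complex.ofReal_zero]
  have hDmap : (Matrix.fromBlocks X 0 0 Y).map Complex.ofReal = D' := by
    rw [Matrix.fromBlocks_map]
    rw [hD', Matrix.map_zero _ Complex.ofReal_zero]
  have hQmap : ((-((Matrix.fromBlocks A B (1 : Matrix (Fin n) (Fin n) ℝ) 0)ᵀ *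
          Matrix.fromBlocks X 0 0 Y *
          Matrix.fromBlocks A B (1 : Matrix (Fin n) (Fin n) ℝ) 0 -
        Matrix.fromBlocks X 0 0 Y))).map Complex.ofReal
      = D' - M'ᵀ * D' * M' := by
    have e : (Complex.ofReal : ℝ → ℂ) = ⇑Complex.ofRealHom := rfl
    have hMmap' := hMmap
    have hDmap' := hDmap
    rw [e] at hMmap' hDmap'
    rw [neg_sub]
    rw [Matrix.map_sub _ (fun a b => Complex.ofReal_sub a b), hDmap, e]
    rw [Matrix.map_mul (f := Complex.ofRealHom), Matrix.map_mul (f := Complex.ofRealHom)]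
    rw [show ((Matrix.fromBlocks A B (1 : Matrix (Fin n) (Fin n) ℝ) 0)ᵀ).map
        ⇑Complex.ofRealHom = M'ᵀ by rw [Matrix.transpose_map]; exact congrArg _ hMmap']
    rw [hDmap', hMmap']
  have hQ' := posDef_map_ofReal h
  rw [hQmap] at hQ'
  -- the test vector
  set v : (Fin n ⊕ Fin n) → ℂ := Sum.elim w (c • w) with hv
  have hvne : v ≠ 0 := by
    intro hcon
    apply hw0
    funext i
    exact congrFun hcon (Sum.inl i)
  have hstarv : star v = Sum.elim (star w) (star c • star w) := by
    funext i
    cases i with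
    | inl i => rfl
    | inr i => simp [hv, Pi.star_apply, star_smul]
  -- real matrices commute with star on vectors
  have conj_mulVec : ∀ (R : Matrix (Fin n) (Fin n) ℝ) (x : Fin n → ℂ),
      (R.map Complex.ofReal) *ᵥ (star x) = star ((R.map Complex.ofReal) *ᵥ x) := by
    intro R x
    funext i
    simp [Matrix.mulVec, dotProduct, star_sum, star_mul', Complex.conj_ofReal]
  have hMv : M' *ᵥ v = Sum.elim (μ • w) w := by
    rw [hv, hM', Matrix.fromBlocks_mulVec]
    simp only [Sum.elim_comp_inl, Sum.elim_comp_inr, Matrix.one_mulVec, Matrix.zero_mulVec,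
      add_zero]
    congr 1
    rw [Matrix.mulVec_smul]
    have : A' *ᵥ w + c • (B' *ᵥ w) = C *ᵥ w := by
      rw [hC, Matrix.add_mulVec, Matrix.smul_mulVec]
    rw [this, heig]
  have hMsv : M' *ᵥ (star v) = Sum.elim (star μ • star w) (star w) := by
    rw [hstarv, hM', Matrix.fromBlocks_mulVec]
    simp only [Sum.elim_comp_inl, Sum.elim_comp_inr, Matrix.one_mulVec, Matrix.zero_mulVec,
      add_zero]
    congr 1
    rw [Matrix.mulVec_smul, hA', hB', conj_mulVec, conj_mulVec, ← star_smul, ← star_add]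
    have : A.map Complex.ofReal *ᵥ w + c • (B.map Complex.ofReal *ᵥ w) = C *ᵥ w := by
      rw [hC, Matrix.add_mulVec, Matrix.smul_mulVec]
    rw [this, heig, star_smul]
  have hDv : ∀ a b : Fin n → ℂ, D' *ᵥ (Sum.elim a b) = Sum.elim (X' *ᵥ a) (Y' *ᵥ b) := by
    intro a b
    rw [hD', Matrix.fromBlocks_mulVec]
    simp
  -- quadratic form computation
  set qX : ℂ := star w ⬝ᵥ (X' *ᵥ w) with hqX
  set qY : ℂ := star w ⬝ᵥ (Y' *ᵥ w) with hqY
  have form1 : star v ⬝ᵥ (D' *ᵥ v) = qX + qY := by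
    rw [hv, hstarv, hDv, sumElim_dotProduct_sumElim]
    congr 1
    rw [Matrix.mulVec_smul, smul_dotProduct, dotProduct_smul]
    rw [smul_eq_mul, smul_eq_mul, ← mul_assoc, hcc, one_mul]
  have form2 : star v ⬝ᵥ ((M'ᵀ * D' * M') *ᵥ v) = star μ * μ * qX + qY := by
    rw [← Matrix.mulVec_mulVec, ← Matrix.mulVec_mulVec]
    rw [Matrix.dotProduct_mulVec, Matrix.vecMul_transpose, hMsv, hMv, hDv,
      sumElim_dotProduct_sumElim]
    congr 1
    rw [Matrix.mulVec_smul, smul_dotProduct, dotProduct_smul]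
    rw [smul_eq_mul, smul_eq_mul, ← mul_assoc]
  have total : star v ⬝ᵥ ((D' - M'ᵀ * D' * M') *ᵥ v) = (1 - star μ * μ) * qX := by
    rw [Matrix.sub_mulVec, dotProduct_sub, form1, form2]
    ring
  -- positivity
  have hpos := hQ'.dotProduct_mulVec_pos hvne
  rw [total] at hpos
  have hqXpos : (0 : ℂ) < qX := (posDef_map_ofReal hX).dotProduct_mulVec_pos hw0
  rw [Complex.lt_def] at hpos hqXpos
  have hmu : (1 : ℂ) - star μ * μ = ((1 - Complex.normSq μ : ℝ) : ℂ) := by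
    rw [RCLike.star_def]
    rw [show (starRingEnd ℂ) μ * μ = μ * (starRingEnd ℂ) μ by ring, Complex.mul_conj]
    push_cast
    ring
  rw [hmu, Complex.re_ofReal_mul] at hpos
  have h1 : 0 < (1 - Complex.normSq μ) * qX.re := hpos.1
  have h2 : 0 < qX.re := by simpa using hqXpos.1
  have h3 : Complex.normSq μ < 1 := by nlinarith
  have h4 : ‖μ‖ ^ 2 < 1 := by
    rw [Complex.sq_norm]
    exact h3
  nlinarith [norm_nonneg μ]
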